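/- For any complexity measure ψ and any decision table T, M_ψ(T) ≤ 2·Ŝ_ψ(T), where M_ψ(T) is the worst-case optimal adaptive-certificate complexity parameter and Ŝ_ψ(T) = max{S_ψ(T*) : T* ∈ [T]} is the maximum separation complexity over the closure of T. -/

import Mathlib

/- Decision tables over E_{k+2} = {0, ..., k+1}, following Ostonov & Moshkov,
"Deterministic and Strongly Nondeterministic Decision Trees for Decision Tables
from Closed Classes".  Columns are labeled with attributes (natural numbers),
rows are functions supported on the attribute set, decisions are Booleans. -/

namespace ClosedClasses

/-- A decision table with 0-1-decisions over `E_{k+2}`. Rows are pairwise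
different (they form a `Finset`) and vanish outside the attribute set. -/
structure Table (k : ℕ) where
  attrs : Finset ℕ
  rows : Finset (ℕ → Fin (k + 2))
  dec : (ℕ → Fin (k + 2)) → Bool
  supp : ∀ r ∈ rows, ∀ a ∉ attrs, r a = 0

namespace Table

variable {k : ℕ}

/-- Number of columns. -/
def W (T : Table k) : ℕ := T.attrs.card

/-- Number of rows. -/
def N (T : Table k) : ℕ := T.rows.card

/-- All rows carry the same decision. -/
def ConstDec (T : Table k) : Prop :=
  ∀ r ∈ T.rows, ∀ r' ∈ T.rows, T.dec r = T.dec r'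

/-- `D` separates the row `r` from all other rows of `T`. -/
def Separates (T : Table k) (D : Finset ℕ) (r : ℕ → Fin (k + 2)) : Prop :=
  D ⊆ T.attrs ∧ ∀ r' ∈ T.rows, r' ≠ r → ∃ a ∈ D, r a ≠ r' a

/-- `S(T, r)`: minimum cardinality of a separating set for row `r`. -/
noncomputable def Srow (T : Table k) (r : ℕ → Fin (k + 2)) : ℕ :=
  sInf {m | ∃ D : Finset ℕ, T.Separates D r ∧ D.card = m}

/-- `S(T)`: maximum over rows of `S(T, r)`. -/
noncomputable def S (T : Table k) : ℕ :=
  sSup {m | ∃ r ∈ T.rows, T.Srow r = m}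

/-- A test of `T`: a set of columns distinguishing rows with different decisions. -/
def IsTest (T : Table k) (D : Finset ℕ) : Prop :=
  D ⊆ T.attrs ∧
    ∀ r ∈ T.rows, ∀ r' ∈ T.rows, T.dec r ≠ T.dec r' → ∃ a ∈ D, r a ≠ r' a

/-- `Θ(T)`: minimum cardinality of a test of `T`. -/
noncomputable def theta (T : Table k) : ℕ :=
  sInf {m | ∃ D : Finset ℕ, T.IsTest D ∧ D.card = m}

end Table

/-- `(k+2)`-decision trees: leaves carry decisions, internal nodes query an
attribute and branch on its `k+2` possible values. -/
inductive DT (k : ℕ) where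
  | leaf : Bool → DT k
  | node : ℕ → (Fin (k + 2) → DT k) → DT k

namespace DT

variable {k : ℕ}

/-- Deterministic evaluation of a tree on a row. -/
def eval : DT k → (ℕ → Fin (k + 2)) → Bool
  | leaf b, _ => b
  | node a ch, r => eval (ch (r a)) r

/-- Depth: maximum number of queries along a complete path. -/
def depth : DT k → ℕ
  | leaf _ => 0
  | node _ ch => 1 + Finset.univ.sup fun i => (ch i).depth

/-- The set `P(Γ)` of attributes queried in the tree. -/
def attrSet : DT k → Finset ℕ
  | leaf _ => ∅
  | node a ch => insert a (Finset.univ.biUnion fun i => (ch i).attrSet)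

/-- `ψ`-cost: maximum over complete paths of `ψ` of the word of queried
attributes (the accumulator `w` holds attributes already queried). -/
def cost (ψ : List ℕ → ℕ) : DT k → List ℕ → ℕ
  | leaf _, w => ψ w
  | node a ch, w => Finset.univ.sup fun i => cost ψ (ch i) (a :: w)

end DT

/-- `Γ` is a deterministic decision tree for the table `T`. -/
def IsDT {k : ℕ} (T : Table k) (Γ : DT k) : Prop :=
  Γ.attrSet ⊆ T.attrs ∧ ∀ r ∈ T.rows, Γ.eval r = T.dec r

/-- `h^d(T)`: minimum depth of a deterministic decision tree for `T`. -/
noncomputable def hd {k : ℕ} (T : Table k) : ℕ :=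
  sInf {m | ∃ Γ : DT k, IsDT T Γ ∧ Γ.depth = m}

/-- `ψ^d(T)`: minimum `ψ`-complexity of a deterministic decision tree for `T`. -/
noncomputable def psid {k : ℕ} (ψ : List ℕ → ℕ) (T : Table k) : ℕ :=
  sInf {m | ∃ Γ : DT k, IsDT T Γ ∧ Γ.cost ψ [] = m}

/-- A row satisfies a rule (a conjunction of equations `attribute = value`). -/
def RuleSat {k : ℕ} (rule : List (ℕ × Fin (k + 2))) (r : ℕ → Fin (k + 2)) : Prop :=
  ∀ p ∈ rule, r p.1 = p.2

/-- A strongly nondeterministic decision tree for `T`, represented by the set of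
words of its complete paths (rules): every rule uses attributes of `T`, each
row with decision 1 satisfies some rule, and each rule is consistent only with
rows carrying decision 1. -/
def IsSNDT {k : ℕ} (T : Table k) (R : Finset (List (ℕ × Fin (k + 2)))) : Prop :=
  (∀ rule ∈ R, ∀ p ∈ rule, p.1 ∈ T.attrs) ∧
  (∀ r ∈ T.rows, T.dec r = true → ∃ rule ∈ R, RuleSat rule r) ∧
  (∀ rule ∈ R, ∀ r ∈ T.rows, RuleSat rule r → T.dec r = true)

/-- `ψ^s(T)`: minimum `ψ`-complexity of a strongly nondeterministic decision
tree for `T`. -/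
noncomputable def psis {k : ℕ} (ψ : List ℕ → ℕ) (T : Table k) : ℕ :=
  sInf {m | ∃ R, IsSNDT T R ∧ R.sup (fun rule => ψ (rule.map Prod.fst)) = m}

/-- `h^s(T)`: minimum depth of a strongly nondeterministic decision tree. -/
noncomputable def hs {k : ℕ} (T : Table k) : ℕ :=
  sInf {m | ∃ R, IsSNDT T R ∧ R.sup (fun rule => (rule.map Prod.fst).length) = m}

/-- A complexity measure on finite words over the alphabet `{f_i : i ∈ ω}`. -/
structure CMeasure where
  ψ : List ℕ → ℕ
  pos : ∀ w, ψ w = 0 ↔ w = []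
  perm : ∀ w w' : List ℕ, w.Perm w' → ψ w = ψ w'
  mono : ∀ w₁ w₂ : List ℕ, ψ w₁ ≤ ψ (w₁ ++ w₂)
  subadd : ∀ w₁ w₂ : List ℕ, ψ (w₁ ++ w₂) ≤ ψ w₁ + ψ w₂

/-- Bounded complexity measure: `ψ(α) ≥ |α|`. -/
def CMeasure.Bounded (ψ : CMeasure) : Prop := ∀ w : List ℕ, w.length ≤ ψ.ψ w

/-- Extension of a complexity measure to finite sets of attributes. -/
def CMeasure.setCost (ψ : CMeasure) (D : Finset ℕ) : ℕ := ψ.ψ (D.sort (· ≤ ·))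

namespace Table

variable {k : ℕ}

/-- `S_ψ(T, r)`: minimum `ψ`-complexity of a set separating `r` from the other rows. -/
noncomputable def Spsirow (ψ : CMeasure) (T : Table k) (r : ℕ → Fin (k + 2)) : ℕ :=
  sInf {m | ∃ D : Finset ℕ, T.Separates D r ∧ ψ.setCost D = m}

/-- `S_ψ(T)`: maximum over rows of `S_ψ(T, r)`. -/
noncomputable def Spsi (ψ : CMeasure) (T : Table k) : ℕ :=
  sSup {m | ∃ r ∈ T.rows, Spsirow ψ T r = m}

/-- `Θ_ψ(T)`: minimum `ψ`-complexity of a test of `T`. -/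
noncomputable def thetapsi (ψ : CMeasure) (T : Table k) : ℕ :=
  sInf {m | ∃ D : Finset ℕ, T.IsTest D ∧ ψ.setCost D = m}

/-- `W_ψ(T) = ψ(P(T))`. -/
def Wpsi (ψ : CMeasure) (T : Table k) : ℕ := ψ.setCost T.attrs

/-- `V_ψ(T) = max{ψ(f_i) : f_i ∈ P(T)}`. -/
noncomputable def Vpsi (ψ : CMeasure) (T : Table k) : ℕ :=
  sSup {m | ∃ a ∈ T.attrs, ψ.ψ [a] = m}

end Table

/-- Restriction of a row to a set of attributes. -/
def restrict {k : ℕ} (A : Finset ℕ) (r : ℕ → Fin (k + 2)) : ℕ → Fin (k + 2) :=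
  fun a => if a ∈ A then r a else 0

/-- `T'` belongs to the closure `[T]` of `T` under removal of columns and
changing of decisions: `T'` keeps a subset of the columns of `T`, its rows are
the restrictions of the rows of `T`, and its decisions are arbitrary. -/
def InClosure {k : ℕ} (T' T : Table k) : Prop :=
  T'.attrs ⊆ T.attrs ∧ (T'.rows : Set (ℕ → Fin (k + 2))) = restrict T'.attrs '' (T.rows : Set (ℕ → Fin (k + 2)))

/-- A nonempty class of decision tables closed under removal of columns and
changing of decisions. -/
def ClosedClass {k : ℕ} (A : Set (Table k)) : Prop :=
  A.Nonempty ∧ ∀ T ∈ A, ∀ T' : Table k, InClosure T' T → T' ∈ A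

/-- `Ŝ_ψ(T) = max{S_ψ(T') : T' ∈ [T]}`. -/
noncomputable def Shatpsi {k : ℕ} (ψ : CMeasure) (T : Table k) : ℕ :=
  sSup {m | ∃ T' : Table k, InClosure T' T ∧ T'.Spsi ψ = m}

/-- `Ŝ(T) = max{S(T') : T' ∈ [T]}`. -/
noncomputable def Shat {k : ℕ} (T : Table k) : ℕ :=
  sSup {m | ∃ T' : Table k, InClosure T' T ∧ T'.S = m}

/-- Fixing the attributes of the word `p` to the listed values restricts `T`
to a subtable (possibly empty) in which all rows carry the same decision. -/
def FixConst {k : ℕ} (T : Table k) (p : List (ℕ × Fin (k + 2))) : Prop :=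
  ∀ r ∈ T.rows, ∀ r' ∈ T.rows, RuleSat p r → RuleSat p r' → T.dec r = T.dec r'

/-- `M_ψ(T, δ)`: minimum `ψ`-value of a word of attributes of `T` whose
fixation to the values of `δ` yields a subtable with constant decisions. -/
noncomputable def Mpsirow {k : ℕ} (ψ : CMeasure) (T : Table k)
    (δ : ℕ → Fin (k + 2)) : ℕ :=
  sInf {m | ∃ p : List (ℕ × Fin (k + 2)),
    (∀ q ∈ p, q.1 ∈ T.attrs ∧ q.2 = δ q.1) ∧ FixConst T p ∧
      ψ.ψ (p.map Prod.fst) = m}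

/-- `M_ψ(T)`: maximum of `M_ψ(T, δ)` over all tuples `δ ∈ E_{k+2}^{W(T)}`. -/
noncomputable def Mpsi {k : ℕ} (ψ : CMeasure) (T : Table k) : ℕ :=
  sSup {m | ∃ δ : ℕ → Fin (k + 2), (∀ a ∉ T.attrs, δ a = 0) ∧ Mpsirow ψ T δ = m}

/-- A critical table: for every column there are two rows differing exactly
in this column. -/
def Critical {k : ℕ} (T : Table k) : Prop :=
  T.rows.Nonempty ∧ ∀ a ∈ T.attrs, ∃ r ∈ T.rows, ∃ r' ∈ T.rows,
    r a ≠ r' a ∧ ∀ b : ℕ, b ≠ a → r b = r' b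

/-- `H_D(n)`: the largest element of `D` not exceeding `n` (0 if none). -/
noncomputable def HD (D : Set ℕ) (n : ℕ) : ℕ := sSup (D ∩ Set.Iic n)

end ClosedClasses


namespace ClosedClasses

variable {k : ℕ}

private lemma sort_perm_append (ψ : CMeasure) {D E : Finset ℕ} (h : D ⊆ E) :
    (E.sort (· ≤ ·)).Perm ((D.sort (· ≤ ·)) ++ ((E \ D).sort (· ≤ ·))) := by
  refine (List.perm_ext_iff_of_nodup (Finset.sort_nodup _ _) ?_).mpr ?_
  · refine (Finset.sort_nodup _ _).append (Finset.sort_nodup _ _) ?_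
    intro a ha hb
    rw [Finset.mem_sort] at ha hb
    exact (Finset.mem_sdiff.mp hb).2 ha
  · intro a
    simp only [List.mem_append, Finset.mem_sort, Finset.mem_sdiff]
    constructor
    · intro haE
      by_cases haD : a ∈ D
      · exact Or.inl haD
      · exact Or.inr ⟨haE, haD⟩
    · rintro (haD | ⟨haE, _⟩)
      · exact h haD
      · exact haE

private lemma setCost_mono (ψ : CMeasure) {D E : Finset ℕ} (h : D ⊆ E) :
    ψ.setCost D ≤ ψ.setCost E := by
  unfold CMeasure.setCost
  rw [ψ.perm _ _ (sort_perm_append ψ h)]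
  exact ψ.mono _ _

private lemma psi_insert_le (ψ : CMeasure) {a : ℕ} {D : Finset ℕ} (ha : a ∉ D) :
    ψ.ψ (a :: D.sort (· ≤ ·)) = ψ.ψ ((insert a D).sort (· ≤ ·)) := by
  apply ψ.perm
  refine (List.perm_ext_iff_of_nodup ?_ (Finset.sort_nodup _ _)).mpr ?_
  · refine List.nodup_cons.mpr ⟨?_, Finset.sort_nodup _ _⟩
    rw [Finset.mem_sort]; exact ha
  · intro b
    simp [Finset.mem_sort, Finset.mem_insert]

private lemma attrs_separates (T : Table k) {r : ℕ → Fin (k + 2)} (hr : r ∈ T.rows) :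
    T.Separates T.attrs r := by
  refine ⟨subset_rfl, fun r' hr' hne => ?_⟩
  by_contra hc
  push_neg at hc
  apply hne
  funext a
  by_cases haT : a ∈ T.attrs
  · exact (hc a haT).symm
  · rw [T.supp r hr a haT, T.supp r' hr' a haT]

private lemma Spsirow_le_setCost (ψ : CMeasure) (T : Table k) {r : ℕ → Fin (k + 2)}
    {D : Finset ℕ} (h : T.Separates D r) : T.Spsirow ψ r ≤ ψ.setCost D :=
  Nat.sInf_le ⟨D, h, rfl⟩

private lemma Spsirow_le_Spsi (ψ : CMeasure) (T : Table k) {r : ℕ → Fin (k + 2)}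
    (hr : r ∈ T.rows) : T.Spsirow ψ r ≤ T.Spsi ψ := by
  apply le_csSup
  · refine ⟨ψ.setCost T.attrs, ?_⟩
    rintro m ⟨r', hr', rfl⟩
    exact Spsirow_le_setCost ψ T (attrs_separates T hr')
  · exact ⟨r, hr, rfl⟩

private lemma Spsi_le_setCost_attrs (ψ : CMeasure) (T : Table k) :
    T.Spsi ψ ≤ ψ.setCost T.attrs := by
  apply csSup_le'
  rintro m ⟨r, hr, rfl⟩
  exact Spsirow_le_setCost ψ T (attrs_separates T hr)

private lemma Spsi_le_Shatpsi (ψ : CMeasure) {T' T : Table k} (h : InClosure T' T) :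
    T'.Spsi ψ ≤ Shatpsi ψ T := by
  apply le_csSup
  · refine ⟨ψ.setCost T.attrs, ?_⟩
    rintro m ⟨T'', h'', rfl⟩
    exact (Spsi_le_setCost_attrs ψ T'').trans (setCost_mono ψ h''.1)
  · exact ⟨T', h, rfl⟩

private lemma Mpsirow_le_main (ψ : CMeasure) (T : Table k) (δ : ℕ → Fin (k + 2)) :
    Mpsirow ψ T δ ≤ 2 * Shatpsi ψ T := by
  classical
  rcases T.rows.eq_empty_or_nonempty with he | hne
  · have h0 : Mpsirow ψ T δ ≤ 0 :=
      Nat.sInf_le ⟨[], by simp, fun r hr => by rw [he] at hr; exact absurd hr (by simp),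
        (ψ.pos []).mpr rfl⟩
    omega
  obtain ⟨r₁, hr₁, hmax⟩ := T.rows.exists_max_image
    (fun r => (T.attrs.filter (fun a => r a = δ a)).card) hne
  set A : Finset ℕ := T.attrs.filter (fun a => r₁ a = δ a) with hA
  have hAsub : A ⊆ T.attrs := Finset.filter_subset _ _
  -- the closure table with attribute set A
  let TA : Table k := ⟨A, T.rows.image (restrict A), fun _ => true,
    fun w hw a ha => by
      obtain ⟨s, hs, rfl⟩ := Finset.mem_image.mp hw
      simp only [restrict, if_neg ha]⟩
  have hclosA : InClosure TA T := ⟨hAsub, Finset.coe_image⟩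
  have hur : restrict A r₁ = restrict A δ := by
    funext a
    unfold restrict
    by_cases haA : a ∈ A
    · rw [if_pos haA, if_pos haA]
      exact (Finset.mem_filter.mp haA).2
    · rw [if_neg haA, if_neg haA]
  have hu : restrict A δ ∈ TA.rows := by
    show restrict A δ ∈ T.rows.image (restrict A)
    exact Finset.mem_image.mpr ⟨r₁, hr₁, hur⟩
  -- a minimum-cost set separating `restrict A δ` in TA
  have hSne : {m | ∃ D, TA.Separates D (restrict A δ) ∧ ψ.setCost D = m}.Nonempty :=
    ⟨_, A, attrs_separates TA hu, rfl⟩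
  obtain ⟨D₁, hD₁sep, hD₁cost⟩ := Nat.sInf_mem hSne
  have hD₁A : D₁ ⊆ A := hD₁sep.1
  have hD₁le : ψ.ψ (D₁.sort (· ≤ ·)) ≤ Shatpsi ψ T := by
    show ψ.setCost D₁ ≤ Shatpsi ψ T
    rw [hD₁cost]
    exact (Spsirow_le_Spsi ψ TA hu).trans (Spsi_le_Shatpsi ψ hclosA)
  -- rows agreeing with δ on D₁ agree with δ on all of A
  have hkey : ∀ r ∈ T.rows, (∀ a ∈ D₁, r a = δ a) → ∀ a ∈ A, r a = δ a := by
    intro r hr hag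
    have hw : restrict A r = restrict A δ := by
      by_contra hne'
      obtain ⟨a, haD, hne''⟩ := hD₁sep.2 (restrict A r)
        (Finset.mem_image_of_mem _ hr) hne'
      have haA : a ∈ A := hD₁A haD
      apply hne''
      simp only [restrict, if_pos haA]
      exact (hag a haD).symm
    intro a haA
    have := congrFun hw a
    simpa only [restrict, if_pos haA] using this
  set p₁ : List (ℕ × Fin (k + 2)) := (D₁.sort (· ≤ ·)).map (fun a => (a, δ a)) with hp₁
  have hp₁sat : ∀ r : ℕ → Fin (k + 2), RuleSat p₁ r ↔ ∀ a ∈ D₁, r a = δ a := by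
    intro r
    constructor
    · intro h a ha
      exact h (a, δ a) (List.mem_map.mpr ⟨a, (Finset.mem_sort _).mpr ha, rfl⟩)
    · rintro h q hq
      obtain ⟨a, ha, rfl⟩ := List.mem_map.mp hq
      exact h a ((Finset.mem_sort _).mp ha)
  have hp₁fst : p₁.map Prod.fst = D₁.sort (· ≤ ·) := by
    rw [hp₁, List.map_map]
    exact List.map_id _
  have hp₁attrs : ∀ q ∈ p₁, q.1 ∈ T.attrs ∧ q.2 = δ q.1 := by
    rintro q hq
    obtain ⟨a, ha, rfl⟩ := List.mem_map.mp hq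
    exact ⟨hAsub (hD₁A ((Finset.mem_sort _).mp ha)), rfl⟩
  by_cases hconst : FixConst T p₁
  · have h0 : Mpsirow ψ T δ ≤ ψ.ψ (D₁.sort (· ≤ ·)) :=
      Nat.sInf_le ⟨p₁, hp₁attrs, hconst, by rw [hp₁fst]⟩
    omega
  · rw [FixConst] at hconst
    push_neg at hconst
    obtain ⟨r, hr, r', hr', hsr, hsr', hdec⟩ := hconst
    have hrQ := hkey r hr ((hp₁sat r).mp hsr)
    have hr'Q := hkey r' hr' ((hp₁sat r').mp hsr')
    have hne_rows : r ≠ r' := fun h => hdec (by rw [h])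
    obtain ⟨astar, hdiff⟩ : ∃ a, r a ≠ r' a := by
      by_contra hc
      push_neg at hc
      exact hne_rows (funext hc)
    have hastar_attrs : astar ∈ T.attrs := by
      by_contra h
      exact hdiff (by rw [T.supp r hr _ h, T.supp r' hr' _ h])
    have hastar_nA : astar ∉ A := fun h => hdiff ((hrQ _ h).trans (hr'Q _ h).symm)
    have hastar_nD₁ : astar ∉ D₁ := fun h => hastar_nA (hD₁A h)
    -- the closure table with the single attribute astar
    let Ts : Table k := ⟨{astar}, T.rows.image (restrict {astar}), fun _ => true,
      fun w hw a ha => by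
        obtain ⟨s, hs, rfl⟩ := Finset.mem_image.mp hw
        simp only [restrict, if_neg ha]⟩
    have hclosS : InClosure Ts T :=
      ⟨Finset.singleton_subset_iff.mpr hastar_attrs, Finset.coe_image⟩
    have hws_ne : restrict {astar} r ≠ restrict {astar} r' := by
      intro h
      apply hdiff
      have := congrFun h astar
      simpa only [restrict, if_pos (Finset.mem_singleton_self astar)] using this
    have hsep_s : Ts.Separates {astar} (restrict {astar} r) := by
      refine ⟨subset_rfl, fun w hw hne' => ⟨astar, Finset.mem_singleton_self _, ?_⟩⟩
      intro hc
      apply hne'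
      funext a
      by_cases ha : a ∈ ({astar} : Finset ℕ)
      · obtain rfl := Finset.mem_singleton.mp ha
        exact (not_ne_iff.mp (fun h => h hc)).symm
      · obtain ⟨s, hs, rfl⟩ := Finset.mem_image.mp hw
        simp only [restrict, if_neg ha]
    have hSne' : {m | ∃ D, Ts.Separates D (restrict {astar} r) ∧ ψ.setCost D = m}.Nonempty :=
      ⟨_, {astar}, hsep_s, rfl⟩
    obtain ⟨Ds, hDs_sep, hDs_cost⟩ := Nat.sInf_mem hSne'
    have hDs_eq : Ds = {astar} := by
      refine Finset.Subset.antisymm hDs_sep.1 ?_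
      obtain ⟨a, haDs, _⟩ := hDs_sep.2 (restrict {astar} r')
        (Finset.mem_image_of_mem _ hr') hws_ne.symm
      obtain rfl := Finset.mem_singleton.mp (hDs_sep.1 haDs)
      exact Finset.singleton_subset_iff.mpr haDs
    have hpsi_astar : ψ.ψ [astar] ≤ Shatpsi ψ T := by
      have h1 : ψ.ψ [astar] = ψ.setCost Ds := by
        rw [hDs_eq]
        unfold CMeasure.setCost
        rw [Finset.sort_singleton]
      rw [h1, hDs_cost]
      exact (Spsirow_le_Spsi ψ Ts (Finset.mem_image_of_mem _ hr)).trans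
        (Spsi_le_Shatpsi ψ hclosS)
    -- no row is consistent with δ on D₁ ∪ {astar}
    have hnone : ∀ s ∈ T.rows, ¬ RuleSat ((astar, δ astar) :: p₁) s := by
      intro s hs hsat
      have h1 : ∀ a ∈ D₁, s a = δ a := (hp₁sat s).mp (fun q hq => hsat q (List.mem_cons_of_mem _ hq))
      have hsQ := hkey s hs h1
      have hsastar : s astar = δ astar := hsat _ List.mem_cons_self
      have hsub : insert astar A ⊆ T.attrs.filter (fun a => s a = δ a) := by
        intro b hb
        rcases Finset.mem_insert.mp hb with rfl | hbA
        · exact Finset.mem_filter.mpr ⟨hastar_attrs, hsastar⟩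
        · exact Finset.mem_filter.mpr ⟨hAsub hbA, hsQ b hbA⟩
      have hc1 := Finset.card_le_card hsub
      rw [Finset.card_insert_of_notMem hastar_nA] at hc1
      have hc2 := hmax s hs
      have hc3 : (T.attrs.filter (fun a => s a = δ a)).card ≤ A.card := hc2
      omega
    have h0 : Mpsirow ψ T δ ≤ ψ.ψ (astar :: D₁.sort (· ≤ ·)) := by
      refine Nat.sInf_le ⟨(astar, δ astar) :: p₁, ?_, ?_, ?_⟩
      · rintro q hq
        rcases List.mem_cons.mp hq with rfl | hq'
        · exact ⟨hastar_attrs, rfl⟩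
        · exact hp₁attrs q hq'
      · intro s hs s' hs' hsat _
        exact absurd hsat (hnone s hs)
      · rw [List.map_cons, hp₁fst]
    have h2 : ψ.ψ (astar :: D₁.sort (· ≤ ·)) ≤ ψ.ψ [astar] + ψ.ψ (D₁.sort (· ≤ ·)) :=
      ψ.subadd [astar] (D₁.sort (· ≤ ·))
    omega

end ClosedClasses

open ClosedClasses

/-- Lemma 7: `M_ψ(T) ≤ 2·Ŝ_ψ(T)`. -/
theorem Mpsi_le_two_Shatpsi (k : ℕ) (ψ : CMeasure) (T : Table k) :
    Mpsi ψ T ≤ 2 * Shatpsi ψ T := by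
  apply csSup_le'
  rintro m ⟨δ, hδ, rfl⟩
  exact ClosedClasses.Mpsirow_le_main ψ T δ
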